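/- Let x be a random vector in ℝ^d with E[xxᵀ] = Σ₀, ‖Σ₀‖ ≤ C₁, satisfying L4-L2 hypercontractivity E[(x·u)⁴] ≤ C (E[(x·u)²])² for all u ∈ ℝ^d. Let η be independent of x with E[η] = 0, and y = w₀·x + η. For w ∈ ℝ^d, κ > 0, and ε > 0, if κ² ≥ 8 C C₁ E[(y − x·w)²]/ε, then ‖E[(x·w − y)/max(|x·w − y|, κ)·κ·x − (x·w − y)x]‖ ≤ ε ‖w − w₀‖. -/

import Mathlib

open MeasureTheory ProbabilityTheory Matrix
open scoped RealInnerProductSpace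

noncomputable def opNorm {d : ℕ} (M : Matrix (Fin d) (Fin d) ℝ) : ℝ :=
  ‖Matrix.toEuclideanCLM (𝕜 := ℝ) M‖

/-- The clipped gradient `g = (x·w − y)/max(|x·w − y|, κ) · κ · x` of the squared loss. -/
noncomputable def clipGrad {Ω : Type*} {d : ℕ} (x : Ω → EuclideanSpace ℝ (Fin d))
    (y : Ω → ℝ) (w : EuclideanSpace ℝ (Fin d)) (κ : ℝ) (ω : Ω) :
    EuclideanSpace ℝ (Fin d) :=
  ((⟪x ω, w⟫ - y ω) / max |⟪x ω, w⟫ - y ω| κ * κ) • x ω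

section helpers
variable {Ω : Type*} [MeasurableSpace Ω] {μ : Measure Ω} [IsProbabilityMeasure μ]

lemma ennfact1 : (2:ENNReal)⁻¹ = 4⁻¹ + 4⁻¹ := by
  rw [← two_mul]
  rw [show (4:ENNReal) = 2*2 by norm_num, ENNReal.mul_inv (by norm_num) (by norm_num)]
  rw [← mul_assoc, ENNReal.mul_inv_cancel (by norm_num) (by norm_num), one_mul]

lemma ennfact2 : (1:ENNReal) = 2⁻¹ + 2⁻¹ := by
  rw [← two_mul, ENNReal.mul_inv_cancel (by norm_num) (by norm_num)]

lemma memL2_of_memL4 {f : Ω → ℝ} (hf : MemLp f 4 μ) : MemLp f 2 μ :=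
  hf.mono_exponent (by norm_num)

lemma memL2_mul_of_memL4 {f g : Ω → ℝ} (hf : MemLp f 4 μ) (hg : MemLp g 4 μ) :
    MemLp (fun ω => f ω * g ω) 2 μ := by
  have h := hf.smul (φ := g) hg (r := 2) (hpqr := ⟨ennfact1.symm⟩)
  simpa [smul_eq_mul, mul_comm, Pi.mul_def] using h

lemma integrable_mul_L2 {f g : Ω → ℝ} (hf : MemLp f 2 μ) (hg : MemLp g 2 μ) :
    Integrable (fun ω => f ω * g ω) μ := by
  have h := hf.smul (φ := g) hg (r := 1) (hpqr := ⟨by rw [inv_one]; exact ennfact2.symm⟩)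
  have := memLp_one_iff_integrable.mp h
  simpa [smul_eq_mul, mul_comm, Pi.mul_def] using this

omit [IsProbabilityMeasure μ] in
lemma memLp_abs {p : ENNReal} {f : Ω → ℝ} (hf : MemLp f p μ) : MemLp (fun ω => |f ω|) p μ := by
  simpa [Real.norm_eq_abs] using hf.norm

lemma cs_integral {f g : Ω → ℝ} (hf : MemLp f 2 μ) (hg : MemLp g 2 μ) :
    (∫ ω, f ω * g ω ∂μ) ^ 2 ≤ (∫ ω, f ω ^ 2 ∂μ) * (∫ ω, g ω ^ 2 ∂μ) := by
  set A := ∫ ω, f ω ^ 2 ∂μ with hA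
  set B := ∫ ω, g ω ^ 2 ∂μ with hB
  set I := ∫ ω, f ω * g ω ∂μ with hI
  have hq : ∀ t : ℝ, 0 ≤ A * (t * t) + (2 * I) * t + B := by
    intro t
    have i1 : Integrable (fun ω => t ^ 2 * f ω ^ 2) μ := (hf.integrable_sq).const_mul _
    have i2 : Integrable (fun ω => 2 * t * (f ω * g ω)) μ :=
      (integrable_mul_L2 hf hg).const_mul _
    have i12 : Integrable (fun ω => t ^ 2 * f ω ^ 2 + 2 * t * (f ω * g ω)) μ := by
      exact i1.add i2
    have h0 : 0 ≤ ∫ ω, (t * f ω + g ω) ^ 2 ∂μ :=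
      integral_nonneg fun ω => sq_nonneg _
    have h1 : (∫ ω, (t * f ω + g ω) ^ 2 ∂μ)
        = t ^ 2 * A + 2 * t * I + B := by
      have he : ∀ ω, (t * f ω + g ω) ^ 2
          = t ^ 2 * f ω ^ 2 + 2 * t * (f ω * g ω) + g ω ^ 2 := fun ω => by ring
      rw [integral_congr_ae (Filter.Eventually.of_forall he),
        integral_add i12 hg.integrable_sq, integral_add i1 i2,
        integral_const_mul, integral_const_mul]
    nlinarith [h0, h1]
  have hd := discrim_le_zero hq
  rw [discrim] at hd
  nlinarith [hd]

end helpers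

noncomputable def clipErr (κ t : ℝ) : ℝ := t / max |t| κ * κ - t

lemma clipErr_eq {κ : ℝ} (hκ : 0 < κ) (t : ℝ) :
    clipErr κ t = min (max t (-κ)) κ - t := by
  unfold clipErr
  rcases le_or_gt |t| κ with h | h
  · rw [max_eq_right h, div_mul_cancel₀ _ (ne_of_gt hκ)]
    rw [abs_le] at h
    rw [max_eq_left (by linarith [h.1]), min_eq_left (by linarith [h.2])]
  · rcases lt_or_ge 0 t with ht | ht
    · have habs : |t| = t := abs_of_pos ht
      have htκ : κ < t := by rwa [habs] at h
      rw [habs, max_eq_left (le_of_lt htκ), div_self (ne_of_gt ht), one_mul,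
        max_eq_left (by linarith), min_eq_right (le_of_lt htκ)]
    · have htneg : t < 0 := by
        rcases lt_or_eq_of_le ht with h' | h'
        · exact h'
        · exfalso; rw [h'] at h; simp at h; linarith
      have habs : |t| = -t := abs_of_neg htneg
      have htκ : t < -κ := by rw [habs] at h; linarith
      rw [habs, max_eq_left (by linarith), max_eq_right (le_of_lt htκ),
        min_eq_left (by linarith), div_neg, div_self (ne_of_lt htneg)]
      ring

lemma clipErr_zero {κ : ℝ} (hκ : 0 < κ) {t : ℝ} (h : |t| ≤ κ) : clipErr κ t = 0 := by
  rw [clipErr_eq hκ]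
  rw [abs_le] at h
  rw [max_eq_left (by linarith [h.1]), min_eq_left h.2, sub_self]

lemma clipErr_lip {κ : ℝ} (hκ : 0 < κ) (p q : ℝ) :
    |clipErr κ p - clipErr κ q| ≤ |p - q| := by
  rw [clipErr_eq hκ, clipErr_eq hκ]
  have h1 := le_abs_self (p - q)
  have h2 := neg_abs_le (p - q)
  rw [abs_le]
  constructor <;>
  · simp only [min_def, max_def]
    split_ifs <;> linarith

lemma clipErr_neg {κ : ℝ} (t : ℝ) : clipErr κ (-t) = - clipErr κ t := by
  unfold clipErr
  rw [abs_neg, neg_div]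
  ring

lemma clipErr_abs_le {κ : ℝ} (hκ : 0 < κ) (t : ℝ) : |clipErr κ t| ≤ |t| := by
  have h0 : clipErr κ 0 = 0 := clipErr_zero hκ (by simpa using hκ.le)
  have h := clipErr_lip hκ t 0
  rw [h0, sub_zero, sub_zero] at h
  exact h

lemma clipErr_key {κ : ℝ} (hκ : 0 < κ) (a e : ℝ) :
    |clipErr κ (a - e) - clipErr κ (-e)| ≤ |a| * (2 * a ^ 2 + 3 * e ^ 2) / κ ^ 2 := by
  rcases le_or_gt |a - e| κ with h1 | h1
  · rcases le_or_gt |e| κ with h2 | h2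
    · rw [clipErr_zero hκ h1, clipErr_zero hκ (by rwa [abs_neg]), sub_self, abs_zero]
      positivity
    · have hk2 : κ ^ 2 ≤ 2 * a ^ 2 + 3 * e ^ 2 := by
        nlinarith [sq_abs e, abs_nonneg e]
      have hl : |clipErr κ (a - e) - clipErr κ (-e)| ≤ |a| := by
        simpa using clipErr_lip hκ (a - e) (-e)
      rw [le_div_iff₀ (by positivity)]
      nlinarith [abs_nonneg a, abs_nonneg (clipErr κ (a - e) - clipErr κ (-e))]
  · have hk2 : κ ^ 2 ≤ 2 * a ^ 2 + 3 * e ^ 2 := by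
      nlinarith [sq_abs (a - e), abs_nonneg (a - e), sq_nonneg (a + e), hκ.le]
    have hl : |clipErr κ (a - e) - clipErr κ (-e)| ≤ |a| := by
      simpa using clipErr_lip hκ (a - e) (-e)
    rw [le_div_iff₀ (by positivity)]
    nlinarith [abs_nonneg a, abs_nonneg (clipErr κ (a - e) - clipErr κ (-e))]

lemma clipErr_cont {κ : ℝ} (hκ : 0 < κ) : Continuous (clipErr κ) := by
  unfold clipErr
  have h : ∀ t : ℝ, max |t| κ ≠ 0 := fun t =>
    ne_of_gt (lt_of_lt_of_le hκ (le_max_right _ _))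
  exact ((continuous_id.div (continuous_abs.max continuous_const) h).mul
    continuous_const).sub continuous_id

set_option maxHeartbeats 3200000 in
/-- Under L4-L2 hypercontractivity, `‖Σ₀‖ ≤ C₁`, `y = w₀·x + η` with `η`
independent of `x`, mean zero and symmetric, if `κ² ≥ 8CC₁E[(y − x·w)²]/ε` then the bias of
clipping is small: `‖E[clip((x·w − y))·x − (x·w − y)x]‖ ≤ ε‖w − w₀‖`. -/
theorem clipGrad_bias {Ω : Type*} [MeasurableSpace Ω] (μ : Measure Ω)
    [IsProbabilityMeasure μ] {d : ℕ}
    (x : Ω → EuclideanSpace ℝ (Fin d)) (η : Ω → ℝ) (y : Ω → ℝ)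
    (hx : MemLp x 4 μ) (hη : MemLp η 2 μ)
    (hind : IndepFun x η μ)
    (hη0 : ∫ ω, η ω ∂μ = 0)
    (hηsym : Measure.map η μ = Measure.map (fun ω => -η ω) μ)
    (w₀ w : EuclideanSpace ℝ (Fin d))
    (hy : ∀ ω, y ω = ⟪x ω, w₀⟫ + η ω)
    (A : Matrix (Fin d) (Fin d) ℝ)
    (hA : ∀ i j, ∫ ω, x ω i * x ω j ∂μ = A i j)
    (C C₁ : ℝ) (hC : 1 ≤ C) (hC₁ : 1 ≤ C₁) (hAn : opNorm A ≤ C₁)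
    (hyper : ∀ u : EuclideanSpace ℝ (Fin d),
      ∫ ω, ⟪x ω, u⟫ ^ 4 ∂μ ≤ C * (∫ ω, ⟪x ω, u⟫ ^ 2 ∂μ) ^ 2)
    (κ ε : ℝ) (hκpos : 0 < κ) (hε : 0 < ε)
    (hκ : 8 * C * C₁ * (∫ ω, (y ω - ⟪x ω, w⟫) ^ 2 ∂μ) / ε ≤ κ ^ 2)
    (hint₁ : Integrable (clipGrad x y w κ) μ)
    (hint₂ : Integrable (fun ω => (⟪x ω, w⟫ - y ω) • x ω) μ) :
    ‖∫ ω, (clipGrad x y w κ ω - (⟪x ω, w⟫ - y ω) • x ω) ∂μ‖ ≤ ε * ‖w - w₀‖ := by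
  classical
  -- notation
  set Δ : EuclideanSpace ℝ (Fin d) := w - w₀ with hΔ
  have hκ2pos : (0:ℝ) < κ ^ 2 := by positivity
  set a : Ω → ℝ := fun ω => ⟪x ω, Δ⟫ with ha
  set r : Ω → ℝ := fun ω => ⟪x ω, w⟫ - y ω with hrdef
  have hra : ∀ ω, r ω = a ω - η ω := by
    intro ω
    simp only [hrdef, ha, hΔ, hy ω, inner_sub_right]
    ring
  -- measurability / MemLp basics
  have hmx : AEStronglyMeasurable x μ := hx.1
  have hmη : AEStronglyMeasurable η μ := hη.1
  have hφmeas : ∀ c : EuclideanSpace ℝ (Fin d),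
      Measurable fun v : EuclideanSpace ℝ (Fin d) => ⟪v, c⟫ := fun c =>
    (continuous_id.inner continuous_const).measurable
  have hb4 : ∀ u : EuclideanSpace ℝ (Fin d), MemLp (fun ω => ⟪x ω, u⟫) 4 μ := fun u =>
    hx.inner_const u
  have ha4 : MemLp a 4 μ := hb4 Δ
  have ha2 : MemLp a 2 μ := memL2_of_memL4 ha4
  have haint : Integrable a μ := ha2.integrable (by norm_num)
  have hη1 : Integrable η μ := hη.integrable (by norm_num)
  have hbm : ∀ u : EuclideanSpace ℝ (Fin d),
      AEStronglyMeasurable (fun ω => ⟪x ω, u⟫) μ := fun u => (hb4 u).1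
  -- second moment bound
  have key2 : ∀ v : EuclideanSpace ℝ (Fin d),
      (∫ ω, ⟪x ω, v⟫ ^ 2 ∂μ) ≤ C₁ * ‖v‖ ^ 2 := by
    intro v
    have hxi : ∀ i, MemLp (fun ω => x ω i) 4 μ := by
      intro i
      have h : MemLp (fun ω => ⟪x ω, EuclideanSpace.single i (1:ℝ)⟫) 4 μ :=
        hx.inner_const _
      simpa [EuclideanSpace.inner_single_right] using h
    have hint_ij : ∀ i j, Integrable (fun ω => x ω i * x ω j) μ := fun i j =>
      integrable_mul_L2 (memL2_of_memL4 (hxi i)) (memL2_of_memL4 (hxi j))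
    have hexp : (∫ ω, ⟪x ω, v⟫ ^ 2 ∂μ) = ∑ i, ∑ j, v i * v j * A i j := by
      have h1 : ∀ ω, ⟪x ω, v⟫ ^ 2 = ∑ i, ∑ j, v i * v j * (x ω i * x ω j) := by
        intro ω
        rw [PiLp.inner_apply]
        simp only [RCLike.inner_apply, conj_trivial]
        rw [sq, Finset.sum_mul_sum]
        apply Finset.sum_congr rfl
        intro i _
        apply Finset.sum_congr rfl
        intro j _
        ring
      rw [integral_congr_ae (Filter.Eventually.of_forall h1)]
      rw [integral_finset_sum _ (fun i _ =>
        integrable_finset_sum _ (fun j _ => (hint_ij i j).const_mul _))]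
      apply Finset.sum_congr rfl
      intro i _
      rw [integral_finset_sum _ (fun j _ => (hint_ij i j).const_mul _)]
      apply Finset.sum_congr rfl
      intro j _
      rw [integral_const_mul, hA i j]
    have hcoord : ∀ i, (Matrix.toEuclideanCLM (𝕜 := ℝ) A v) i = ∑ j, A i j * v j := by
      intro i
      have h := Matrix.ofLp_toEuclideanCLM (𝕜 := ℝ) A v
      have h2 := congrFun h i
      rw [h2]
      simp [Matrix.mulVec, dotProduct, Matrix.toLin'_apply]
    have hAvv : ∑ i, ∑ j, v i * v j * A i j = ⟪(Matrix.toEuclideanCLM (𝕜 := ℝ) A) v, v⟫ := by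
      rw [PiLp.inner_apply]
      simp only [RCLike.inner_apply, conj_trivial]
      apply Finset.sum_congr rfl
      intro i _
      rw [hcoord i, Finset.mul_sum]
      apply Finset.sum_congr rfl
      intro j _
      ring
    have hb1 : ⟪(Matrix.toEuclideanCLM (𝕜 := ℝ) A) v, v⟫
        ≤ ‖(Matrix.toEuclideanCLM (𝕜 := ℝ) A) v‖ * ‖v‖ := real_inner_le_norm _ _
    have hb2 : ‖(Matrix.toEuclideanCLM (𝕜 := ℝ) A) v‖ ≤ opNorm A * ‖v‖ :=
      (Matrix.toEuclideanCLM (𝕜 := ℝ) A).le_opNorm v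
    have hv0 : (0:ℝ) ≤ ‖v‖ := norm_nonneg v
    rw [hexp, hAvv]
    calc ⟪(Matrix.toEuclideanCLM (𝕜 := ℝ) A) v, v⟫
        ≤ ‖(Matrix.toEuclideanCLM (𝕜 := ℝ) A) v‖ * ‖v‖ := hb1
      _ ≤ (opNorm A * ‖v‖) * ‖v‖ := mul_le_mul_of_nonneg_right hb2 hv0
      _ ≤ (C₁ * ‖v‖) * ‖v‖ :=
          mul_le_mul_of_nonneg_right (mul_le_mul_of_nonneg_right hAn hv0) hv0
      _ = C₁ * ‖v‖ ^ 2 := by ring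
  -- independence pieces
  have hcont := clipErr_cont hκpos
  have hcneg : Continuous fun t : ℝ => clipErr κ (-t) := hcont.comp continuous_neg
  have ind_aη : IndepFun a η μ := hind.comp (hφmeas Δ) measurable_id
  -- clipErr (-η) has mean zero
  have hηae : AEMeasurable η μ := hmη.aemeasurable
  have hz0 : ∫ ω, clipErr κ (-η ω) ∂μ = 0 := by
    have h1 : ∫ ω, clipErr κ (-η ω) ∂μ = ∫ t, clipErr κ (-t) ∂(Measure.map η μ) :=
      (integral_map hηae hcneg.aestronglyMeasurable).symm
    have h3 : ∫ t, clipErr κ (-t) ∂(Measure.map (fun ω => -η ω) μ)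
        = ∫ ω, clipErr κ (η ω) ∂μ := by
      rw [integral_map (φ := fun ω => -η ω) hηae.neg hcneg.aestronglyMeasurable]
      simp
    have h4 : ∫ ω, clipErr κ (η ω) ∂μ = - ∫ ω, clipErr κ (-η ω) ∂μ := by
      rw [← integral_neg]
      apply integral_congr_ae
      apply Filter.Eventually.of_forall
      intro ω
      show clipErr κ (η ω) = - clipErr κ (-η ω)
      conv_lhs => rw [← neg_neg (η ω)]
      rw [clipErr_neg]
    have hchain : ∫ ω, clipErr κ (-η ω) ∂μ = ∫ ω, clipErr κ (η ω) ∂μ := by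
      rw [h1, hηsym, h3]
    linarith [hchain, h4]
  have hzb : ∀ u : EuclideanSpace ℝ (Fin d),
      ∫ ω, clipErr κ (-η ω) * ⟪x ω, u⟫ ∂μ = 0 := by
    intro u
    have hI : IndepFun (fun ω => clipErr κ (-η ω)) (fun ω => ⟪x ω, u⟫) μ :=
      (hind.comp (hφmeas u) (hcneg.measurable)).symm
    rw [hI.integral_fun_mul_eq_mul_integral (hcneg.comp_aestronglyMeasurable hmη) (hbm u), hz0, zero_mul]
  -- variance decomposition
  set S := ∫ ω, (y ω - ⟪x ω, w⟫) ^ 2 ∂μ with hSdef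
  set P := ∫ ω, a ω ^ 2 ∂μ with hPdef
  set E2 := ∫ ω, η ω ^ 2 ∂μ with hE2def
  have ia2 : Integrable (fun ω => a ω ^ 2) μ := ha2.integrable_sq
  have iη2 : Integrable (fun ω => η ω ^ 2) μ := hη.integrable_sq
  have iaη : Integrable (fun ω => a ω * η ω) μ := ind_aη.integrable_mul haint hη1
  have haη0 : ∫ ω, a ω * η ω ∂μ = 0 := by
    rw [ind_aη.integral_fun_mul_eq_mul_integral haint.1 hη1.1, hη0, mul_zero]
  have hSsum : S = P + E2 := by
    have hpt : ∀ ω, (y ω - ⟪x ω, w⟫) ^ 2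
        = η ω ^ 2 - 2 * (a ω * η ω) + a ω ^ 2 := by
      intro ω
      simp only [ha, hΔ, hy ω, inner_sub_right]
      ring
    have h1 : S = ∫ ω, (η ω ^ 2 - 2 * (a ω * η ω) + a ω ^ 2) ∂μ := by
      rw [hSdef]
      exact integral_congr_ae (Filter.Eventually.of_forall hpt)
    have i12 : Integrable (fun ω => η ω ^ 2 - 2 * (a ω * η ω)) μ := by
      exact iη2.sub (iaη.const_mul 2)
    rw [h1, integral_add i12 ia2,
      integral_sub iη2 (iaη.const_mul 2), integral_const_mul, haη0]
    ring
  have hP0 : (0:ℝ) ≤ P := integral_nonneg fun ω => sq_nonneg _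
  have hE20 : (0:ℝ) ≤ E2 := integral_nonneg fun ω => sq_nonneg _
  have hS0 : (0:ℝ) ≤ S := by rw [hSsum]; linarith
  have hPS : P ≤ S := by rw [hSsum]; linarith
  have hE2S : E2 ≤ S := by rw [hSsum]; linarith
  have hPle : P ≤ C₁ * ‖Δ‖ ^ 2 := key2 Δ
  have h8 : 8 * C * C₁ * S ≤ ε * κ ^ 2 := by
    have := (div_le_iff₀ hε).mp hκ
    linarith [this]
  -- the key bound for every direction u
  have keyT : ∀ u : EuclideanSpace ℝ (Fin d),
      |∫ ω, clipErr κ (r ω) * ⟪x ω, u⟫ ∂μ| ≤ ε * ‖Δ‖ * ‖u‖ := by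
    intro u
    set b : Ω → ℝ := fun ω => ⟪x ω, u⟫ with hb
    set Q := ∫ ω, b ω ^ 2 ∂μ with hQdef
    have hbu4 : MemLp b 4 μ := hb4 u
    have hbu2 : MemLp b 2 μ := memL2_of_memL4 hbu4
    have hQ0 : (0:ℝ) ≤ Q := integral_nonneg fun ω => sq_nonneg _
    have hQle : Q ≤ C₁ * ‖u‖ ^ 2 := key2 u
    have hab2 : MemLp (fun ω => a ω * b ω) 2 μ := memL2_mul_of_memL4 ha4 hbu4
    have hababs2 : MemLp (fun ω => |a ω * b ω|) 2 μ := memLp_abs hab2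
    have hasq2 : MemLp (fun ω => a ω ^ 2) 2 μ := by
      simp only [pow_two]
      exact memL2_mul_of_memL4 ha4 ha4
    have hbsq2 : MemLp (fun ω => b ω ^ 2) 2 μ := by
      simp only [pow_two]
      exact memL2_mul_of_memL4 hbu4 hbu4
    have int_ab : Integrable (fun ω => a ω * b ω) μ := integrable_mul_L2 ha2 hbu2
    have int_ηb : Integrable (fun ω => η ω * b ω) μ := integrable_mul_L2 hη hbu2
    -- fourth moments
    have hyperA : ∫ ω, a ω ^ 4 ∂μ ≤ C * P ^ 2 := hyper Δ
    have hyperB : ∫ ω, b ω ^ 4 ∂μ ≤ C * Q ^ 2 := hyper u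
    have ha4nn : (0:ℝ) ≤ ∫ ω, a ω ^ 4 ∂μ := integral_nonneg fun ω => by positivity
    have hb4nn : (0:ℝ) ≤ ∫ ω, b ω ^ 4 ∂μ := integral_nonneg fun ω => by positivity
    -- t = sqrt (P * Q)
    set t := Real.sqrt (P * Q) with htdef
    have ht0 : (0:ℝ) ≤ t := Real.sqrt_nonneg _
    have ht2 : t ^ 2 = P * Q := Real.sq_sqrt (by positivity)
    have htle : t ≤ C₁ * ‖Δ‖ * ‖u‖ := by
      have hz0 : (0:ℝ) ≤ C₁ * ‖Δ‖ * ‖u‖ := by positivity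
      have h1 : t ^ 2 ≤ (C₁ * ‖Δ‖ * ‖u‖) ^ 2 := by
        rw [ht2]
        calc P * Q ≤ (C₁ * ‖Δ‖ ^ 2) * (C₁ * ‖u‖ ^ 2) :=
              mul_le_mul hPle hQle hQ0 (by positivity)
          _ = (C₁ * ‖Δ‖ * ‖u‖) ^ 2 := by ring
      exact (pow_le_pow_iff_left₀ ht0 hz0 two_ne_zero).mp h1
    -- M1 = ∫ |ab| ≤ t
    set M1 := ∫ ω, |a ω * b ω| ∂μ with hM1def
    have hM10 : (0:ℝ) ≤ M1 := integral_nonneg fun ω => abs_nonneg _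
    have hM1t : M1 ≤ t := by
      have hcs := cs_integral (memLp_abs ha2) (memLp_abs hbu2)
      have e1 : ∫ ω, |a ω| * |b ω| ∂μ = M1 := by
        rw [hM1def]
        exact integral_congr_ae (Filter.Eventually.of_forall fun ω => (abs_mul _ _).symm)
      have e2 : ∫ ω, |a ω| ^ 2 ∂μ = P := by
        rw [hPdef]
        exact integral_congr_ae (Filter.Eventually.of_forall fun ω => sq_abs _)
      have e3 : ∫ ω, |b ω| ^ 2 ∂μ = Q := by
        rw [hQdef]
        exact integral_congr_ae (Filter.Eventually.of_forall fun ω => sq_abs _)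
      rw [e1, e2, e3] at hcs
      have h1 : M1 ^ 2 ≤ t ^ 2 := by rw [ht2]; exact hcs
      exact (pow_le_pow_iff_left₀ hM10 ht0 two_ne_zero).mp h1
    -- ∫ a²b² ≤ C P Q
    have hI2 : ∫ ω, a ω ^ 2 * b ω ^ 2 ∂μ ≤ C * P * Q := by
      have hcs := cs_integral hasq2 hbsq2
      have e1 : ∫ ω, (a ω ^ 2) ^ 2 ∂μ = ∫ ω, a ω ^ 4 ∂μ :=
        integral_congr_ae (Filter.Eventually.of_forall fun ω => by ring)
      have e2 : ∫ ω, (b ω ^ 2) ^ 2 ∂μ = ∫ ω, b ω ^ 4 ∂μ :=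
        integral_congr_ae (Filter.Eventually.of_forall fun ω => by ring)
      rw [e1, e2] at hcs
      have hprod : (∫ ω, a ω ^ 4 ∂μ) * ∫ ω, b ω ^ 4 ∂μ ≤ (C * P ^ 2) * (C * Q ^ 2) :=
        mul_le_mul hyperA hyperB hb4nn (by positivity)
      have hint2nn : (0:ℝ) ≤ ∫ ω, a ω ^ 2 * b ω ^ 2 ∂μ :=
        integral_nonneg fun ω => by positivity
      have hCPQ : (0:ℝ) ≤ C * P * Q := by
        have hC0 : (0:ℝ) ≤ C := by linarith
        positivity
      have h1 : (∫ ω, a ω ^ 2 * b ω ^ 2 ∂μ) ^ 2 ≤ (C * P * Q) ^ 2 := by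
        calc (∫ ω, a ω ^ 2 * b ω ^ 2 ∂μ) ^ 2
            ≤ (C * P ^ 2) * (C * Q ^ 2) := le_trans hcs hprod
          _ = (C * P * Q) ^ 2 := by ring
      exact (pow_le_pow_iff_left₀ hint2nn hCPQ two_ne_zero).mp h1
    -- M3 = ∫ a² |ab| ≤ C P t
    set M3 := ∫ ω, a ω ^ 2 * |a ω * b ω| ∂μ with hM3def
    have hM30 : (0:ℝ) ≤ M3 := integral_nonneg fun ω => by positivity
    have hM3t : M3 ≤ C * P * t := by
      have hcs := cs_integral hasq2 hababs2
      have e1 : ∫ ω, (a ω ^ 2) ^ 2 ∂μ = ∫ ω, a ω ^ 4 ∂μ :=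
        integral_congr_ae (Filter.Eventually.of_forall fun ω => by ring)
      have e2 : ∫ ω, |a ω * b ω| ^ 2 ∂μ = ∫ ω, a ω ^ 2 * b ω ^ 2 ∂μ :=
        integral_congr_ae (Filter.Eventually.of_forall fun ω => by
          show |a ω * b ω| ^ 2 = a ω ^ 2 * b ω ^ 2
          rw [sq_abs]; ring)
      rw [e1, e2] at hcs
      have h1 : M3 ^ 2 ≤ (C * P ^ 2) * (C * P * Q) := by
        have h2 : (∫ ω, a ω ^ 4 ∂μ) * ∫ ω, a ω ^ 2 * b ω ^ 2 ∂μ ≤ (C * P ^ 2) * (C * P * Q) := by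
          apply mul_le_mul hyperA hI2 (integral_nonneg fun ω => by positivity) (by positivity)
        exact le_trans hcs h2
      have h3 : (C * P * t) ^ 2 = (C * P ^ 2) * (C * P * Q) := by
        rw [mul_pow, mul_pow, ht2]; ring
      have hCPt : (0:ℝ) ≤ C * P * t := by
        have hC0 : (0:ℝ) ≤ C := by linarith
        positivity
      have h4 : M3 ^ 2 ≤ (C * P * t) ^ 2 := by rw [h3]; exact h1
      exact (pow_le_pow_iff_left₀ hM30 hCPt two_ne_zero).mp h4
    -- integrability of the products appearing below
    have int_asq_ab : Integrable (fun ω => a ω ^ 2 * |a ω * b ω|) μ :=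
      integrable_mul_L2 hasq2 hababs2
    have ind_abs_η2 : IndepFun (fun ω => |a ω * b ω|) (fun ω => η ω ^ 2) μ := by
      have hψ1 : Measurable fun v : EuclideanSpace ℝ (Fin d) => |⟪v, Δ⟫ * ⟪v, u⟫| :=
        ((hφmeas Δ).mul (hφmeas u)).abs
      have hψ2 : Measurable fun s : ℝ => s ^ 2 := measurable_id.pow_const 2
      exact hind.comp hψ1 hψ2
    have int_abs_η2 : Integrable (fun ω => |a ω * b ω| * η ω ^ 2) μ :=
      ind_abs_η2.integrable_mul int_ab.abs iη2
    have habsη2_eq : ∫ ω, |a ω * b ω| * η ω ^ 2 ∂μ = M1 * E2 := by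
      rw [ind_abs_η2.integral_fun_mul_eq_mul_integral int_ab.abs.1 iη2.1]
    -- measurability of clipped quantities
    have hrm : AEStronglyMeasurable r μ := by
      apply (haint.1.sub hmη).congr
      exact Filter.Eventually.of_forall fun ω => (hra ω).symm
    have asm_fr : AEStronglyMeasurable (fun ω => clipErr κ (r ω)) μ :=
      hcont.comp_aestronglyMeasurable hrm
    have asm_fn : AEStronglyMeasurable (fun ω => clipErr κ (-η ω)) μ :=
      hcneg.comp_aestronglyMeasurable hmη
    have int_frb : Integrable (fun ω => clipErr κ (r ω) * b ω) μ := by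
      apply Integrable.mono' (int_ab.abs.add int_ηb.abs) (asm_fr.mul (hbm u))
      apply Filter.Eventually.of_forall
      intro ω
      show ‖clipErr κ (r ω) * b ω‖ ≤ |a ω * b ω| + |η ω * b ω|
      have h1 : |clipErr κ (r ω)| ≤ |a ω| + |η ω| := by
        have := clipErr_abs_le hκpos (r ω)
        have h2 : |r ω| ≤ |a ω| + |η ω| := by
          rw [hra ω]; exact abs_sub _ _
        linarith
      have h3 : ‖clipErr κ (r ω) * b ω‖ = |clipErr κ (r ω)| * |b ω| := by
        rw [Real.norm_eq_abs, abs_mul]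
      rw [h3]
      calc |clipErr κ (r ω)| * |b ω| ≤ (|a ω| + |η ω|) * |b ω| :=
            mul_le_mul_of_nonneg_right h1 (abs_nonneg _)
        _ = |a ω * b ω| + |η ω * b ω| := by rw [abs_mul, abs_mul]; ring
    have int_fnb : Integrable (fun ω => clipErr κ (-η ω) * b ω) μ := by
      apply Integrable.mono' int_ηb.abs (asm_fn.mul (hbm u))
      apply Filter.Eventually.of_forall
      intro ω
      show ‖clipErr κ (-η ω) * b ω‖ ≤ |η ω * b ω|
      have h1 : |clipErr κ (-η ω)| ≤ |η ω| := by
        have := clipErr_abs_le hκpos (-η ω)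
        rwa [abs_neg] at this
      rw [Real.norm_eq_abs, abs_mul, abs_mul]
      exact mul_le_mul_of_nonneg_right h1 (abs_nonneg _)
    -- split the integral
    have hT : ∫ ω, (clipErr κ (r ω) - clipErr κ (-η ω)) * b ω ∂μ
        = ∫ ω, clipErr κ (r ω) * b ω ∂μ := by
      have h1 : ∀ ω, (clipErr κ (r ω) - clipErr κ (-η ω)) * b ω
          = clipErr κ (r ω) * b ω - clipErr κ (-η ω) * b ω := fun ω => by ring
      rw [integral_congr_ae (Filter.Eventually.of_forall h1),
        integral_sub int_frb int_fnb, hzb u, sub_zero]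
    have int_diffb : Integrable (fun ω => (clipErr κ (r ω) - clipErr κ (-η ω)) * b ω) μ := by
      have h1 : ∀ ω, clipErr κ (r ω) * b ω - clipErr κ (-η ω) * b ω
          = (clipErr κ (r ω) - clipErr κ (-η ω)) * b ω := fun ω => by ring
      exact (int_frb.sub int_fnb).congr (Filter.Eventually.of_forall h1)
    -- pointwise bound
    have int_bound : Integrable (fun ω =>
        (2 * (a ω ^ 2 * |a ω * b ω|) + 3 * (|a ω * b ω| * η ω ^ 2)) / κ ^ 2) μ :=
      ((int_asq_ab.const_mul 2).add (int_abs_η2.const_mul 3)).div_const _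
    have hptb : ∀ ω, |(clipErr κ (r ω) - clipErr κ (-η ω)) * b ω|
        ≤ (2 * (a ω ^ 2 * |a ω * b ω|) + 3 * (|a ω * b ω| * η ω ^ 2)) / κ ^ 2 := by
      intro ω
      have hk := clipErr_key hκpos (a ω) (η ω)
      rw [← hra ω] at hk
      have h2 : |(clipErr κ (r ω) - clipErr κ (-η ω)) * b ω|
          = |clipErr κ (r ω) - clipErr κ (-η ω)| * |b ω| := abs_mul _ _
      rw [h2]
      have h3 : |clipErr κ (r ω) - clipErr κ (-η ω)| * |b ω|
          ≤ (|a ω| * (2 * a ω ^ 2 + 3 * η ω ^ 2) / κ ^ 2) * |b ω| :=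
        mul_le_mul_of_nonneg_right hk (abs_nonneg _)
      refine h3.trans (le_of_eq ?_)
      rw [abs_mul]
      field_simp
    have habs_int : |∫ ω, (clipErr κ (r ω) - clipErr κ (-η ω)) * b ω ∂μ|
        ≤ (2 * M3 + 3 * (M1 * E2)) / κ ^ 2 := by
      calc |∫ ω, (clipErr κ (r ω) - clipErr κ (-η ω)) * b ω ∂μ|
          ≤ ∫ ω, |(clipErr κ (r ω) - clipErr κ (-η ω)) * b ω| ∂μ := by
            have h := norm_integral_le_integral_norm (μ := μ)
              (fun ω => (clipErr κ (r ω) - clipErr κ (-η ω)) * b ω)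
            simpa only [Real.norm_eq_abs] using h
        _ ≤ ∫ ω, (2 * (a ω ^ 2 * |a ω * b ω|) + 3 * (|a ω * b ω| * η ω ^ 2)) / κ ^ 2 ∂μ :=
            integral_mono int_diffb.abs int_bound hptb
        _ = (2 * M3 + 3 * (M1 * E2)) / κ ^ 2 := by
            rw [integral_div, integral_add (int_asq_ab.const_mul 2) (int_abs_η2.const_mul 3),
              integral_const_mul, integral_const_mul, habsη2_eq, hM3def]
    -- numeric conclusion
    have hnum : (2 * M3 + 3 * (M1 * E2)) / κ ^ 2 ≤ ε * ‖Δ‖ * ‖u‖ := by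
      have step1 : 2 * M3 + 3 * (M1 * E2) ≤ 5 * C * S * t := by
        have g1 : (0:ℝ) ≤ C * (t * (S - P)) :=
          mul_nonneg (by linarith) (mul_nonneg ht0 (by linarith))
        have g2 : (0:ℝ) ≤ t * (S - E2) := mul_nonneg ht0 (by linarith)
        have g3 : (0:ℝ) ≤ (C - 1) * (S * t) :=
          mul_nonneg (by linarith) (mul_nonneg hS0 ht0)
        have g4 : M1 * E2 ≤ t * E2 := mul_le_mul_of_nonneg_right hM1t hE20
        have e3 : 2 * (C * P * t) + 3 * (t * E2) ≤ 5 * C * S * t := by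
          linarith [g1, g2, g3]
        linarith [hM3t, g4, e3]
      have step2 : 5 * C * S * t ≤ 5 * C * S * (C₁ * ‖Δ‖ * ‖u‖) := by
        apply mul_le_mul_of_nonneg_left htle
        have : (0:ℝ) ≤ C := by linarith
        positivity
      have hX : (0:ℝ) ≤ ‖Δ‖ * ‖u‖ := mul_nonneg (norm_nonneg _) (norm_nonneg _)
      have step3 : 5 * C * S * (C₁ * ‖Δ‖ * ‖u‖) ≤ ε * κ ^ 2 * (‖Δ‖ * ‖u‖) := by
        have hCC₁S : (0:ℝ) ≤ C * C₁ * S := by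
          have hC0 : (0:ℝ) ≤ C := by linarith
          have hC₁0 : (0:ℝ) ≤ C₁ := by linarith
          positivity
        have h1 : 5 * C * C₁ * S ≤ ε * κ ^ 2 := by linarith [h8, hCC₁S]
        calc 5 * C * S * (C₁ * ‖Δ‖ * ‖u‖) = (5 * C * C₁ * S) * (‖Δ‖ * ‖u‖) := by ring
          _ ≤ (ε * κ ^ 2) * (‖Δ‖ * ‖u‖) := mul_le_mul_of_nonneg_right h1 hX
          _ = ε * κ ^ 2 * (‖Δ‖ * ‖u‖) := by ring
      rw [div_le_iff₀ hκ2pos]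
      linarith [step1, step2, step3]
    rw [← hT]
    exact habs_int.trans hnum
  -- assemble
  have hVint : Integrable (fun ω => clipGrad x y w κ ω - (⟪x ω, w⟫ - y ω) • x ω) μ :=
    hint₁.sub hint₂
  have key3 : ∀ c : EuclideanSpace ℝ (Fin d), ∀ ω : Ω,
      ⟪c, clipGrad x y w κ ω - (⟪x ω, w⟫ - y ω) • x ω⟫ = clipErr κ (r ω) * ⟪x ω, c⟫ := by
    intro c ω
    have h1 : clipGrad x y w κ ω - (⟪x ω, w⟫ - y ω) • x ω = clipErr κ (r ω) • x ω := by
      simp only [clipGrad, clipErr, hrdef, sub_smul]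
    rw [h1, real_inner_smul_right, real_inner_comm]
  set V := ∫ ω, (clipGrad x y w κ ω - (⟪x ω, w⟫ - y ω) • x ω) ∂μ with hV
  have hVinner : ⟪V, V⟫ = ∫ ω, clipErr κ (r ω) * ⟪x ω, V⟫ ∂μ := by
    rw [← integral_congr_ae (Filter.Eventually.of_forall (key3 V)),
      integral_inner hVint V, ← hV]
  have hVnorm : ‖V‖ ^ 2 ≤ ε * ‖Δ‖ * ‖V‖ := by
    rw [← real_inner_self_eq_norm_sq, hVinner]
    exact le_trans (le_abs_self _) (keyT V)
  rcases eq_or_lt_of_le (norm_nonneg V) with h0 | h0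
  · rw [← h0]
    positivity
  · nlinarith [hVnorm, h0]
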